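/- Let U = {u ∈ ℝ^m : G u ≤ h} be a polyhedron given by a matrix G ∈ ℝ^{p×m} and h ∈ ℝ^p, let D ⊆ ℝ^n be a nonempty compact set, and K ∈ ℝ^{m×n}. Then the Pontryagin difference U ⊖ KD equals {u ∈ ℝ^m : G u ≤ h − s}, where s ∈ ℝ^p is defined componentwise by s_i = max_{d ∈ D} (G_i K d), the maximum of the i-th row of G applied to Kd over d ∈ D. -/
import Mathlib


/-- Pontryagin difference: `S ⊖ T = {x | x + t ∈ S for all t ∈ T}`. -/
def pontryaginDiff {α : Type*} [Add α] (S T : Set α) : Set α := {x | ∀ t ∈ T, x + t ∈ S}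

/-- the Pontryagin difference of a polyhedron `U = {u | Gu ≤ h}` and the
linear image `K '' D` of a nonempty compact set `D` is the polyhedron `{u | Gu ≤ h - s}`,
where `s i = max_{d ∈ D} (G K d) i`. -/
theorem pontryagin_diff_polyhedron {n m p : ℕ}
    (G : Matrix (Fin p) (Fin m) ℝ) (h : Fin p → ℝ)
    (U : Set (Fin m → ℝ)) (hU : U = {u | ∀ i, G.mulVec u i ≤ h i})
    (D : Set (Fin n → ℝ)) (hDne : D.Nonempty) (hDc : IsCompact D)
    (K : Matrix (Fin m) (Fin n) ℝ)
    (s : Fin p → ℝ)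
    (hs : ∀ i, IsGreatest ((fun d => G.mulVec (K.mulVec d) i) '' D) (s i)) :
    pontryaginDiff U (K.mulVec '' D) = {u | ∀ i, G.mulVec u i ≤ h i - s i} := by
  subst hU
  ext u
  constructor
  · intro hu i
    obtain ⟨d, hd, hds⟩ := (hs i).1
    have := hu (K.mulVec d) ⟨d, hd, rfl⟩ i
    rw [Matrix.mulVec_add] at this
    simp only [Pi.add_apply] at this
    rw [← hds]
    linarith
  · rintro hu _ ⟨d, hd, rfl⟩ i
    have h1 := (hs i).2 (Set.mem_image_of_mem _ hd)
    have h2 := hu i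
    simp only [Matrix.mulVec_add, Pi.add_apply]
    linarith
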